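/- For a nonidentity element w of a free partially commutative monoid M, the signed count Σ (−1)^{|Q|} over all cliques Q such that w_Q is a left factor of w (i.e., w = w_Q · w' for some w' ∈ M) equals 0; for w the identity this sum equals 1. -/

import Mathlib

open scoped Classical

/-- The relation generating a free partially commutative (trace) monoid:
`x_a x_b = x_b x_a` for `(a,b)` in the commutation set `I`. -/
def traceRel (n : ℕ) (I : Set (Fin n × Fin n)) :
    FreeMonoid (Fin n) → FreeMonoid (Fin n) → Prop := fun u v =>
  ∃ a b, (a, b) ∈ I ∧ u = FreeMonoid.of a * FreeMonoid.of b ∧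
    v = FreeMonoid.of b * FreeMonoid.of a

/-- The congruence generated by the commutation relations. -/
abbrev traceCon (n : ℕ) (I : Set (Fin n × Fin n)) : Con (FreeMonoid (Fin n)) :=
  conGen (traceRel n I)

/-- The free partially commutative monoid `⟨x_1,…,x_n⟩/≃_I`. -/
abbrev TraceMonoid (n : ℕ) (I : Set (Fin n × Fin n)) := (traceCon n I).Quotient

/-- The generator `x_i` as an element of the trace monoid. -/
def gen {n : ℕ} {I : Set (Fin n × Fin n)} (i : Fin n) : TraceMonoid n I :=
  (traceCon n I).mk' (FreeMonoid.of i)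

/-- A clique of the trace monoid: a set of generators which pairwise commute. -/
def IsMClique {n : ℕ} (I : Set (Fin n × Fin n)) (Q : Finset (Fin n)) : Prop :=
  ∀ a ∈ Q, ∀ b ∈ Q, a ≠ b → Commute (gen (I := I) a) (gen (I := I) b)

/-- The canonical word `w_Q` in the trace monoid associated to a finite set of
generators (taking the product in increasing order). -/
def wordOf {n : ℕ} (I : Set (Fin n × Fin n)) (Q : Finset (Fin n)) : TraceMonoid n I :=
  (traceCon n I).mk' (FreeMonoid.ofList (Q.sort (· ≤ ·)))

/-- The Cauchy product of two formal power series on a monoid. -/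
noncomputable def cauchy {M : Type*} [Monoid M] (f g : M → ℤ) : M → ℤ := fun w =>
  ∑ᶠ p : M × M, if p.1 * p.2 = w then f p.1 * g p.2 else 0

/-- The unit of the ring of formal power series: the characteristic function
of the identity. -/
noncomputable def deltaOne {M : Type*} [Monoid M] : M → ℤ := fun w => if w = 1 then 1 else 0

namespace Stmt2Aux

open FreeMonoid

variable {n : ℕ} {I : Set (Fin n × Fin n)}

/-- symmetric closure of the commutation set -/
def J (I : Set (Fin n × Fin n)) (a b : Fin n) : Prop := (a, b) ∈ I ∨ (b, a) ∈ I

lemma J.symm {a b : Fin n} (h : J I a b) : J I b a := h.elim Or.inr Or.inl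

/-- shorthand: class of a list -/
def mkl (I : Set (Fin n × Fin n)) (l : List (Fin n)) : TraceMonoid n I :=
  (traceCon n I).mk' (FreeMonoid.ofList l)

lemma mkl_nil : mkl I [] = 1 := by
  simp [mkl, FreeMonoid.ofList]
  rfl

lemma mkl_cons (a : Fin n) (l : List (Fin n)) :
    mkl I (a :: l) = gen a * mkl I l := by
  rw [mkl, mkl, FreeMonoid.ofList_cons, map_mul]; rfl

lemma mkl_append (l₁ l₂ : List (Fin n)) :
    mkl I (l₁ ++ l₂) = mkl I l₁ * mkl I l₂ := by
  rw [mkl, mkl, mkl, FreeMonoid.ofList_append, map_mul]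

lemma mk'_eq_mkl (u : FreeMonoid (Fin n)) :
    (traceCon n I).mk' u = mkl I u.toList := by
  rw [mkl, FreeMonoid.ofList_toList]

lemma gen_comm {a b : Fin n} (h : J I a b) : gen (I := I) a * gen b = gen b * gen a := by
  show (traceCon n I).mk' (FreeMonoid.of a) * (traceCon n I).mk' (FreeMonoid.of b) =
    (traceCon n I).mk' (FreeMonoid.of b) * (traceCon n I).mk' (FreeMonoid.of a)
  rw [← map_mul, ← map_mul]
  refine (Con.eq _).2 ?_
  rcases h with h | h
  · exact ConGen.Rel.of _ _ ⟨a, b, h, rfl, rfl⟩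
  · exact ConGen.Rel.symm (ConGen.Rel.of _ _ ⟨b, a, h, rfl, rfl⟩)

lemma gen_commute {a b : Fin n} (h : J I a b) : Commute (gen (I := I) a) (gen b) :=
  gen_comm h

lemma swap_front (a : Fin n) :
    ∀ (p : List (Fin n)) (s : List (Fin n)), (∀ b ∈ p, J I a b) →
      mkl I (p ++ a :: s) = mkl I (a :: (p ++ s))
  | [], s, _ => rfl
  | b :: p, s, h => by
    have ih := swap_front a p s (fun c hc => h c (List.mem_cons_of_mem _ hc))
    have hb : J I a b := h b List.mem_cons_self
    calc mkl I ((b :: p) ++ a :: s) = gen b * mkl I (p ++ a :: s) := by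
          rw [List.cons_append, mkl_cons]
      _ = gen b * (gen a * mkl I (p ++ s)) := by rw [ih, mkl_cons]
      _ = gen a * (gen b * mkl I (p ++ s)) := by
          rw [← mul_assoc, ← mul_assoc, gen_comm hb.symm]
      _ = mkl I (a :: ((b :: p) ++ s)) := by rw [List.cons_append, mkl_cons, mkl_cons]

/-- lengths are invariant under the congruence -/
lemma con_length {u v : FreeMonoid (Fin n)} (h : traceCon n I u v) :
    u.toList.length = v.toList.length := by
  let f : FreeMonoid (Fin n) →* Multiplicative ℕ :=
    { toFun := fun u => Multiplicative.ofAdd u.toList.length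
      map_one' := rfl
      map_mul' := by
        intro x y
        simp [FreeMonoid.toList_mul, ofAdd_add] }
  have hle : traceCon n I ≤ Con.ker f := by
    apply Con.conGen_le.2
    rintro x y ⟨a, b, _, rfl, rfl⟩
    refine (Con.ker_rel f).2 ?_
    show Multiplicative.ofAdd (of a * of b).toList.length = Multiplicative.ofAdd (of b * of a).toList.length
    simp [f, FreeMonoid.toList_mul]
  have hf : f u = f v := (Con.ker_rel f).1 (Con.le_def.1 hle h)
  simpa [f, Multiplicative.ofAdd] using hf

/-- projections onto suitable subalphabets are invariant -/
lemma con_proj (p : Fin n → Prop) [DecidablePred p]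
    (hp : ∀ a b, (a, b) ∈ I → p a → p b → a = b) {u v : FreeMonoid (Fin n)}
    (h : traceCon n I u v) :
    u.toList.filter (fun c => decide (p c)) = v.toList.filter (fun c => decide (p c)) := by
  let f : FreeMonoid (Fin n) →* FreeMonoid (Fin n) :=
    { toFun := fun u => FreeMonoid.ofList (u.toList.filter (fun c => decide (p c)))
      map_one' := rfl
      map_mul' := by
        intro x y
        simp [FreeMonoid.toList_mul, List.filter_append, FreeMonoid.ofList_append] }
  have hle : traceCon n I ≤ Con.ker f := by
    apply Con.conGen_le.2
    rintro x y ⟨a, b, hI, rfl, rfl⟩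
    refine (Con.ker_rel f).2 ?_
    show FreeMonoid.ofList ((of a * of b).toList.filter _) = FreeMonoid.ofList ((of b * of a).toList.filter _)
    by_cases ha : p a <;> by_cases hb : p b
    · have : a = b := hp a b hI ha hb
      subst this; rfl
    · simp [f, FreeMonoid.toList_mul, ha, hb]
    · simp [f, FreeMonoid.toList_mul, ha, hb]
    · simp [f, FreeMonoid.toList_mul, ha, hb]
  have hf : f u = f v := (Con.ker_rel f).1 (Con.le_def.1 hle h)
  have := congrArg FreeMonoid.toList hf
  exact this

lemma exists_first {a : Fin n} :
    ∀ {v : List (Fin n)}, a ∈ v → ∃ p v', v = p ++ a :: v' ∧ a ∉ p := by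
  intro v hv
  induction v with
  | nil => exact absurd hv List.not_mem_nil
  | cons c t ih =>
    by_cases hca : c = a
    · exact ⟨[], t, by rw [hca]; rfl, List.not_mem_nil⟩
    · rcases ih (by
        rcases List.mem_cons.1 hv with h | h
        · exact absurd h.symm hca
        · exact h) with ⟨p, v', rfl, hap⟩
      exact ⟨c :: p, v', rfl, by
        intro hmem
        rcases List.mem_cons.1 hmem with h | h
        · exact hca h.symm
        · exact hap h⟩

/-- extraction lemma: if `a·u ≈ v` then the first occurrence of `a`
in `v` is preceded only by letters commuting with `a`. -/
lemma extract {a : Fin n} {u v : List (Fin n)}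
    (h : mkl I (a :: u) = mkl I v) :
    ∃ p v', v = p ++ a :: v' ∧ ∀ b ∈ p, b ≠ a ∧ J I a b := by
  have hcon : traceCon n I (FreeMonoid.ofList (a :: u)) (FreeMonoid.ofList v) :=
    (Con.eq _).1 h
  have hmem : a ∈ v := by
    have hfil := con_proj (fun c => c = a) (fun x y _ hx hy => hx.trans hy.symm) hcon
    by_contra hmem
    rw [FreeMonoid.toList_ofList, FreeMonoid.toList_ofList] at hfil
    have : (v.filter (fun c => decide (c = a))) = [] :=
      List.filter_eq_nil_iff.2 (by intro b hb; simp; intro hba; exact hmem (hba ▸ hb))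
    rw [this] at hfil
    simp at hfil
  obtain ⟨p, v', rfl, hap⟩ := exists_first hmem
  refine ⟨p, v', rfl, fun b hb => ⟨fun hba => hap (hba ▸ hb), ?_⟩⟩
  by_contra hJ
  have hab : a ≠ b := fun hab => hap (hab ▸ hb)
  have hfil := con_proj (fun c => c = a ∨ c = b) (by
    rintro x y hxy (rfl | rfl) (rfl | rfl)
    · rfl
    · exact absurd (Or.inl hxy) hJ
    · exact absurd (Or.inr hxy) hJ
    · rfl) hcon
  rw [FreeMonoid.toList_ofList, FreeMonoid.toList_ofList] at hfil
  rw [List.filter_append] at hfil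
  have hpa : (a :: u).filter (fun c => decide (c = a ∨ c = b)) =
      a :: u.filter (fun c => decide (c = a ∨ c = b)) := by simp
  have hva : (a :: v').filter (fun c => decide (c = a ∨ c = b)) =
      a :: v'.filter (fun c => decide (c = a ∨ c = b)) := by simp
  rw [hpa, hva] at hfil
  rcases hq : p.filter (fun c => decide (c = a ∨ c = b)) with _ | ⟨c, t⟩
  · have : b ∉ p := by
      intro hbp
      have : b ∈ p.filter (fun c => decide (c = a ∨ c = b)) := by
        rw [List.mem_filter]; exact ⟨hbp, by simp⟩
      rw [hq] at this; exact List.not_mem_nil this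
    exact this hb
  · have hc : c ∈ p.filter (fun c => decide (c = a ∨ c = b)) := by rw [hq]; simp
    rw [List.mem_filter] at hc
    have hcp : c ∈ p := hc.1
    have : a = c := by
      rw [hq] at hfil
      exact (List.cons_eq_cons.1 hfil).1
    exact hap (this ▸ hcp)

/-- key step: two distinct left-dividing generators commute, and each divides
the complement of the other. -/
lemma div_step {a b : Fin n} {w w₁ w₂ : TraceMonoid n I} (hab : a ≠ b)
    (h₁ : gen a * w₁ = w) (h₂ : gen b * w₂ = w) :
    Commute (gen (I := I) a) (gen b) ∧ ∃ w₃, gen b * w₃ = w₁ := by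
  obtain ⟨u₁, rfl⟩ := Con.mk'_surjective w₁
  obtain ⟨u₂, rfl⟩ := Con.mk'_surjective w₂
  have h : mkl I (b :: u₂.toList) = mkl I (a :: u₁.toList) := by
    rw [mkl_cons, mkl_cons, ← mk'_eq_mkl, ← mk'_eq_mkl]
    exact h₂.trans h₁.symm
  obtain ⟨p, v', hv, hp⟩ := extract h
  rcases p with _ | ⟨c, p'⟩
  · exact absurd (List.cons_eq_cons.1 hv).1 hab
  · have hca : a = c := (List.cons_eq_cons.1 hv).1
    have hu₁ : u₁.toList = p' ++ b :: v' := (List.cons_eq_cons.1 hv).2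
    have hJba : J I b a := hca ▸ (hp c List.mem_cons_self).2
    refine ⟨(gen_commute hJba).symm, mkl I (p' ++ v'), ?_⟩
    have hswap : mkl I (p' ++ b :: v') = mkl I (b :: (p' ++ v')) :=
      swap_front b p' v' (fun c hc => (hp c (List.mem_cons_of_mem _ hc)).2)
    rw [mk'_eq_mkl, hu₁, hswap, mkl_cons]

lemma wordOf_eq_mkl (Q : Finset (Fin n)) : wordOf I Q = mkl I (Q.sort (· ≤ ·)) := rfl

lemma mkl_eq_prod : ∀ l : List (Fin n), mkl I l = (l.map (gen (I := I))).prod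
  | [] => mkl_nil
  | a :: l => by rw [mkl_cons, List.map_cons, List.prod_cons, mkl_eq_prod l]

lemma wordOf_empty : wordOf I (∅ : Finset (Fin n)) = 1 := by
  rw [wordOf_eq_mkl, Finset.sort_empty, mkl_nil]

lemma pairwise_commute_sort {Q : Finset (Fin n)} (hQ : IsMClique I Q) :
    List.Pairwise Commute ((Q.sort (· ≤ ·)).map (gen (I := I))) := by
  rw [List.pairwise_map]
  refine (Finset.sort_nodup Q (· ≤ ·)).imp_of_mem ?_
  intro a b ha hb hne
  exact hQ a ((Finset.mem_sort _).1 ha) b ((Finset.mem_sort _).1 hb) hne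

lemma wordOf_insert {a : Fin n} {Q : Finset (Fin n)} (ha : a ∉ Q)
    (hc : IsMClique I (insert a Q)) :
    wordOf I (insert a Q) = gen a * wordOf I Q := by
  rw [wordOf_eq_mkl, wordOf_eq_mkl, mkl_eq_prod, mkl_eq_prod]
  have hperm : (((insert a Q).sort (· ≤ ·)).map (gen (I := I))).Perm
      ((a :: Q.sort (· ≤ ·)).map (gen (I := I))) :=
    List.Perm.map _ (((Finset.sort_perm_toList _ _).trans
      (Finset.toList_insert ha)).trans
      (List.Perm.cons a (Finset.sort_perm_toList _ _).symm))
  rw [hperm.prod_eq' (pairwise_commute_sort hc), List.map_cons, List.prod_cons]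

lemma wordOf_mem_factor {a : Fin n} {Q : Finset (Fin n)} (ha : a ∈ Q)
    (hc : IsMClique I Q) :
    wordOf I Q = gen a * wordOf I (Q.erase a) := by
  conv_lhs => rw [← Finset.insert_erase ha]
  exact wordOf_insert (Finset.notMem_erase a Q) (by rw [Finset.insert_erase ha]; exact hc)

lemma clique_subset {Q Q' : Finset (Fin n)} (h : Q' ⊆ Q) (hc : IsMClique I Q) :
    IsMClique I Q' := fun a ha b hb hab => hc a (h ha) b (h hb) hab

/-- forward direction -/
lemma mem_of_div {Q : Finset (Fin n)} (hc : IsMClique I Q) {w : TraceMonoid n I}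
    (h : ∃ w', wordOf I Q * w' = w) {a : Fin n} (ha : a ∈ Q) :
    ∃ w'', gen a * w'' = w := by
  obtain ⟨w', hw'⟩ := h
  exact ⟨wordOf I (Q.erase a) * w', by rw [← mul_assoc, ← wordOf_mem_factor ha hc, hw']⟩

/-- backward direction -/
lemma div_of_forall_mem : ∀ (Q : Finset (Fin n)), IsMClique I Q →
    ∀ w : TraceMonoid n I, (∀ a ∈ Q, ∃ w', gen a * w' = w) →
      ∃ w', wordOf I Q * w' = w := by
  intro Q
  induction Q using Finset.induction_on with
  | empty => intro _ w _; exact ⟨w, by rw [wordOf_empty, one_mul]⟩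
  | @insert a Q ha ih =>
    intro hc w hdiv
    obtain ⟨w₁, h₁⟩ := hdiv a (Finset.mem_insert_self a Q)
    have hQdiv : ∀ b ∈ Q, ∃ w', gen b * w' = w₁ := by
      intro b hb
      obtain ⟨w₂, h₂⟩ := hdiv b (Finset.mem_insert_of_mem hb)
      exact (div_step (fun hab => ha (by rw [hab]; exact hb)) h₁ h₂).2
    obtain ⟨w', hw'⟩ := ih (clique_subset (Finset.subset_insert a Q) hc) w₁ hQdiv
    exact ⟨w', by rw [wordOf_insert ha hc, mul_assoc, hw', h₁]⟩

lemma mkl_eq_one {l : List (Fin n)} (h : mkl I l = 1) : l = [] := by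
  have h1 : (1 : TraceMonoid n I) = mkl I [] := mkl_nil.symm
  rw [h1] at h
  have hcon := (Con.eq (traceCon n I)).1 h
  have := con_length hcon
  rw [FreeMonoid.toList_ofList, FreeMonoid.toList_ofList] at this
  exact List.length_eq_zero_iff.1 this

end Stmt2Aux

/-- The clique polynomial `μ_M = Σ_Q (−1)^{|Q|} [Q]` of a trace monoid. -/


noncomputable def cliqueSeries (n : ℕ) (I : Set (Fin n × Fin n)) : TraceMonoid n I → ℤ :=
  fun w => ∑ Q ∈ (Finset.univ : Finset (Fin n)).powerset.filter (IsMClique I),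
    if wordOf I Q = w then (-1 : ℤ) ^ Q.card else 0
/-- For a nonidentity element w of a free partially commutative monoid, the
signed count Σ (−1)^{|Q|} over all cliques Q whose word w_Q is a left factor
of w equals 0; for w the identity it equals 1. -/
theorem stmt_2 (n : ℕ) (I : Set (Fin n × Fin n)) (w : TraceMonoid n I) :
    (∑ Q ∈ (Finset.univ : Finset (Fin n)).powerset.filter (IsMClique I),
      if ∃ w' : TraceMonoid n I, wordOf I Q * w' = w then (-1 : ℤ) ^ Q.card else 0) =
      (if w = 1 then 1 else 0) := by
  classical
  open Stmt2Aux in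
  by_cases hw : w = 1
  · subst hw
    rw [if_pos rfl]
    rw [Finset.sum_eq_single_of_mem ∅ (by
        simp [Finset.mem_filter, Finset.mem_powerset]
        intro a ha; exact absurd ha (Finset.notMem_empty a))]
    · rw [if_pos ⟨1, by rw [Stmt2Aux.wordOf_empty, one_mul]⟩, Finset.card_empty, pow_zero]
    · intro Q _ hQne
      rw [if_neg]
      rintro ⟨w', hw'⟩
      obtain ⟨u', rfl⟩ := Con.mk'_surjective w'
      rw [Stmt2Aux.wordOf_eq_mkl, Stmt2Aux.mk'_eq_mkl, ← Stmt2Aux.mkl_append] at hw'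
      have := Stmt2Aux.mkl_eq_one hw'
      have hsort : Q.sort (· ≤ ·) = [] := by
        cases h : Q.sort (· ≤ ·) with
        | nil => rfl
        | cons c t => rw [h] at this; simp at this
      apply hQne
      ext x
      simp only [Finset.notMem_empty, iff_false]
      intro hx
      have : x ∈ Q.sort (· ≤ ·) := (Finset.mem_sort _).2 hx
      rw [hsort] at this
      exact List.not_mem_nil this
  · rw [if_neg hw]
    set S : Finset (Fin n) :=
      Finset.univ.filter (fun i => ∃ w', gen (I := I) i * w' = w) with hS
    have hmemS : ∀ i : Fin n, i ∈ S ↔ ∃ w', gen (I := I) i * w' = w := by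
      intro i; rw [hS, Finset.mem_filter]; simp
    have hScom : ∀ a ∈ S, ∀ b ∈ S, a ≠ b →
        Commute (gen (I := I) a) (gen (I := I) b) := by
      intro a ha b hb hab
      obtain ⟨w₁, h₁⟩ := (hmemS a).1 ha
      obtain ⟨w₂, h₂⟩ := (hmemS b).1 hb
      exact (Stmt2Aux.div_step hab h₁ h₂).1
    have key : ∀ Q : Finset (Fin n),
        (IsMClique I Q ∧ ∃ w', wordOf I Q * w' = w) ↔ Q ⊆ S := by
      intro Q
      constructor
      · rintro ⟨hc, hdiv⟩ a haQ
        exact (hmemS a).2 (Stmt2Aux.mem_of_div hc hdiv haQ)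
      · intro hsub
        have hc : IsMClique I Q := fun a ha b hb hab =>
          hScom a (hsub ha) b (hsub hb) hab
        exact ⟨hc, Stmt2Aux.div_of_forall_mem Q hc w
          (fun a haQ => (hmemS a).1 (hsub haQ))⟩
    have hSne : S ≠ ∅ := by
      obtain ⟨u, rfl⟩ := Con.mk'_surjective w
      cases hu : u.toList with
      | nil =>
        exfalso
        apply hw
        rw [Stmt2Aux.mk'_eq_mkl, hu, Stmt2Aux.mkl_nil]
      | cons a t =>
        intro hSe
        have haS : a ∈ S := (hmemS a).2 ⟨Stmt2Aux.mkl I t, by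
          rw [← Stmt2Aux.mkl_cons, ← hu, ← Stmt2Aux.mk'_eq_mkl]⟩
        rw [hSe] at haS
        exact Finset.notMem_empty a haS
    rw [Finset.sum_filter]
    have hpt : ∀ Q ∈ (Finset.univ : Finset (Fin n)).powerset,
        (if IsMClique I Q then
          (if ∃ w' : TraceMonoid n I, wordOf I Q * w' = w then (-1 : ℤ) ^ Q.card else 0)
          else 0) = if Q ⊆ S then (-1 : ℤ) ^ Q.card else 0 := by
      intro Q _
      by_cases hsub : Q ⊆ S
      · obtain ⟨hc, hdiv⟩ := (key Q).2 hsub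
        rw [if_pos hc, if_pos hdiv, if_pos hsub]
      · rw [if_neg hsub]
        by_cases hc : IsMClique I Q
        · rw [if_pos hc, if_neg]
          intro hdiv
          exact hsub ((key Q).1 ⟨hc, hdiv⟩)
        · rw [if_neg hc]
    rw [Finset.sum_congr rfl hpt, ← Finset.sum_filter]
    have hfe : (Finset.univ : Finset (Fin n)).powerset.filter (· ⊆ S) = S.powerset := by
      ext Q
      simp [Finset.mem_powerset, Finset.mem_filter]
    rw [hfe, Finset.sum_powerset_neg_one_pow_card, if_neg hSne]
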